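/- Let x > 0 and let m ≥ 1 be a natural number. Suppose d_0 = 1 and d_m = (1/m) ∑_{k=1}^{m} d_{m−k}·(a_{k+1} + (−1)^k x^k) defines a sequence, where a_k are given. If a_k satisfies (ν+1,m)/2^m = ∑_{k=0}^{m} ((ν,m−k)/2^{m−k}) a_k for all m ≤ M with ν = 2n+3/2, then d_m = ∑_{k=0}^{m} (−1)^k ((ν, m−k)/2^{m−k}) x^k for all m ≤ M−1. -/

import Mathlib

noncomputable def hankelSymbol (ν : ℝ) (n : ℕ) : ℝ :=
  (∏ k ∈ Finset.range n, (4 * ν ^ 2 - (2 * (k : ℝ) + 1) ^ 2)) /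
    (n.factorial * 2 ^ (2 * n))

open Finset

private noncomputable def bb (ν : ℝ) (p : ℕ) : ℝ := hankelSymbol ν p / 2 ^ p

private lemma bb_zero (ν : ℝ) : bb ν 0 = 1 := by
  simp [bb, hankelSymbol]

private lemma bb_succ (ν : ℝ) (p : ℕ) :
    bb ν (p + 1) = bb ν p * (4 * ν ^ 2 - (2 * (p : ℝ) + 1) ^ 2) / (8 * ((p : ℝ) + 1)) := by
  unfold bb hankelSymbol
  rw [Finset.prod_range_succ]
  have hden : (((p+1).factorial : ℝ) * 2 ^ (2 * (p + 1))) * 2 ^ (p + 1) =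
      ((p.factorial : ℝ) * 2 ^ (2 * p) * 2 ^ p) * (8 * ((p:ℝ)+1)) := by
    rw [Nat.factorial_succ, mul_add 2 p 1, pow_add, pow_succ]
    push_cast; ring
  rw [div_div, div_div, div_mul_eq_mul_div, div_div, hden]

private lemma keyB (ν : ℝ) (p : ℕ) :
    bb (ν + 1) (p + 1) = bb ν (p + 1) + bb ν p * ((2 * ν + 2 * (p : ℝ) + 1) / 2) := by
  induction p with
  | zero =>
      rw [bb_succ, bb_succ, bb_zero, bb_zero]
      push_cast
      ring
  | succ p ih =>
      rw [bb_succ (ν + 1) (p + 1), ih, bb_succ ν (p + 1), bb_succ ν p]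
      have h2 : ((p : ℝ) + 1) ≠ 0 := by positivity
      have h3 : ((p : ℝ) + 1 + 1) ≠ 0 := by positivity
      push_cast
      field_simp
      ring

private lemma sumswap (m : ℕ) (f : ℕ → ℕ → ℝ) :
    ∑ k ∈ Icc 1 m, ∑ j ∈ range (m - k + 1), f k j
      = ∑ i ∈ Ico 1 (m + 1), ∑ k ∈ Ico 1 (i + 1), f k (i - k) := by
  rw [← Finset.Ico_add_one_right_eq_Icc, ← Finset.sum_Ico_Ico_comm]
  apply Finset.sum_congr rfl
  intro k hk
  rw [mem_Ico] at hk
  rw [Finset.sum_Ico_eq_sum_range]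
  have h : m + 1 - k = m - k + 1 := by omega
  rw [h]
  apply Finset.sum_congr rfl
  intro j _
  congr 1
  omega

theorem dcoef_closed_form (n M : ℕ) (x : ℝ) (hx : 0 < x) (a d : ℕ → ℝ)
    (hd0 : d 0 = 1)
    (hd : ∀ m, 1 ≤ m →
      d m = (1 / (m : ℝ)) * ∑ k ∈ Finset.Icc 1 m,
        d (m - k) * (a (k + 1) + (-1 : ℝ) ^ k * x ^ k))
    (ha : ∀ m ≤ M,
      hankelSymbol (2 * n + 3 / 2 + 1) m / 2 ^ m =
        ∑ k ∈ Finset.range (m + 1),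
          hankelSymbol (2 * n + 3 / 2) (m - k) / 2 ^ (m - k) * a k) :
    ∀ m ≤ M - 1,
      d m = ∑ k ∈ Finset.range (m + 1),
        (-1 : ℝ) ^ k * (hankelSymbol (2 * n + 3 / 2) (m - k) / 2 ^ (m - k)) * x ^ k := by
  set ν : ℝ := 2 * n + 3 / 2 with hν
  have ha' : ∀ m ≤ M, bb (ν + 1) m = ∑ k ∈ range (m + 1), bb ν (m - k) * a k := by
    intro m hm
    simpa [bb] using ha m hm
  have ha0 : a 0 = 1 := by
    have h := ha' 0 (Nat.zero_le M)
    simpa [bb_zero] using h.symm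
  have ha1 : 1 ≤ M → a 1 = ν + 1 / 2 := by
    intro hM
    have h := ha' 1 hM
    rw [Finset.sum_range_succ, Finset.sum_range_one] at h
    have hk := keyB ν 0
    simp only [Nat.cast_zero] at hk
    simp only [Nat.sub_self, Nat.sub_zero, bb_zero, ha0, mul_one, one_mul] at h hk
    rw [hk] at h
    linarith
  have KI : ∀ p, p + 1 ≤ M →
      ∑ k ∈ Icc 1 p, bb ν (p - k) * a (k + 1) = (p : ℝ) * bb ν p := by
    intro p hp
    have hM1 : 1 ≤ M := le_trans (by omega) hp
    have h := ha' (p + 1) hp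
    rw [Finset.sum_range_succ', Finset.sum_range_succ'] at h
    have hre : ∑ k ∈ Icc 1 p, bb ν (p - k) * a (k + 1)
        = ∑ k ∈ range p, bb ν (p + 1 - (k + 1 + 1)) * a (k + 1 + 1) := by
      rw [← Finset.Ico_add_one_right_eq_Icc, Finset.sum_Ico_eq_sum_range]
      apply Finset.sum_congr (by norm_num)
      intro k _
      congr 2 <;> omega
    rw [hre]
    rw [keyB ν p, ha0, ha1 hM1] at h
    simp only [Nat.sub_zero, Nat.add_sub_cancel, mul_one] at h
    linear_combination -h

  show ∀ m ≤ M - 1, d m = ∑ k ∈ Finset.range (m + 1),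
      (-1 : ℝ) ^ k * bb ν (m - k) * x ^ k
  intro m
  induction m using Nat.strong_induction_on with
  | _ m IH =>
    intro hm
    rcases Nat.eq_zero_or_pos m with rfl | h1
    · rw [hd0, Finset.sum_range_one]
      simp [bb_zero]
    · have hM2 : m + 1 ≤ M := by omega
      rw [hd m h1]
      have hDrw : ∀ k ∈ Icc 1 m, d (m - k) * (a (k + 1) + (-1 : ℝ) ^ k * x ^ k)
          = (∑ j ∈ range ((m - k) + 1), (-1 : ℝ) ^ j * bb ν ((m - k) - j) * x ^ j)
            * (a (k + 1) + (-1 : ℝ) ^ k * x ^ k) := by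
        intro k hk
        rw [mem_Icc] at hk
        rw [IH (m - k) (by omega) (by omega)]
      rw [Finset.sum_congr rfl hDrw]
      have hsplit : ∑ k ∈ Icc 1 m,
            (∑ j ∈ range (m - k + 1), (-1 : ℝ) ^ j * bb ν (m - k - j) * x ^ j)
              * (a (k + 1) + (-1 : ℝ) ^ k * x ^ k)
          = (∑ k ∈ Icc 1 m, ∑ j ∈ range (m - k + 1),
              ((-1 : ℝ) ^ j * bb ν (m - k - j) * x ^ j * a (k + 1)))
            + ∑ k ∈ Icc 1 m, ∑ j ∈ range (m - k + 1),
              ((-1 : ℝ) ^ j * bb ν (m - k - j) * x ^ j * ((-1 : ℝ) ^ k * x ^ k)) := by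
        rw [← Finset.sum_add_distrib]
        apply Finset.sum_congr rfl
        intro k _
        rw [mul_add, Finset.sum_mul, Finset.sum_mul]
      rw [hsplit]
      have hrefl : ∀ k ∈ Icc 1 m,
          ∑ j ∈ range (m - k + 1), ((-1 : ℝ) ^ j * bb ν (m - k - j) * x ^ j * a (k + 1))
            = ∑ j ∈ range (m - k + 1),
                ((-1 : ℝ) ^ (m - k - j) * bb ν j * x ^ (m - k - j) * a (k + 1)) := by
        intro k hk
        rw [mem_Icc] at hk
        have hr := Finset.sum_range_reflect
          (fun j => (-1 : ℝ) ^ (m - k - j) * bb ν j * x ^ (m - k - j) * a (k + 1)) (m - k + 1)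
        rw [← hr]
        apply Finset.sum_congr rfl
        intro j hj
        rw [mem_range] at hj
        have e1 : m - k + 1 - 1 - j = m - k - j := by omega
        have e2 : m - k - (m - k - j) = j := by omega
        simp only [e1, e2]
      rw [Finset.sum_congr rfl hrefl]
      have hS1 : ∑ k ∈ Icc 1 m, ∑ j ∈ range (m - k + 1),
            ((-1 : ℝ) ^ (m - k - j) * bb ν j * x ^ (m - k - j) * a (k + 1))
          = ∑ i ∈ Ico 1 (m + 1), (i : ℝ) * ((-1 : ℝ) ^ (m - i) * bb ν i * x ^ (m - i)) := by
        rw [sumswap m (fun k j => (-1 : ℝ) ^ (m - k - j) * bb ν j * x ^ (m - k - j) * a (k + 1))]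
        apply Finset.sum_congr rfl
        intro i hi
        rw [mem_Ico] at hi
        have hterm : ∀ k ∈ Ico 1 (i + 1),
            (-1 : ℝ) ^ (m - k - (i - k)) * bb ν (i - k) * x ^ (m - k - (i - k)) * a (k + 1)
              = bb ν (i - k) * a (k + 1) * ((-1 : ℝ) ^ (m - i) * x ^ (m - i)) := by
          intro k hk
          rw [mem_Ico] at hk
          have e : m - k - (i - k) = m - i := by omega
          rw [e]; ring
        rw [Finset.sum_congr rfl hterm, ← Finset.sum_mul, Finset.Ico_add_one_right_eq_Icc, KI i (by omega)]
        ring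
      rw [hS1]
      have hS2 : ∑ k ∈ Icc 1 m, ∑ j ∈ range (m - k + 1),
            ((-1 : ℝ) ^ j * bb ν (m - k - j) * x ^ j * ((-1 : ℝ) ^ k * x ^ k))
          = ∑ i ∈ Ico 1 (m + 1), (i : ℝ) * ((-1 : ℝ) ^ i * bb ν (m - i) * x ^ i) := by
        rw [sumswap m
          (fun k j => (-1 : ℝ) ^ j * bb ν (m - k - j) * x ^ j * ((-1 : ℝ) ^ k * x ^ k))]
        apply Finset.sum_congr rfl
        intro i hi
        rw [mem_Ico] at hi
        have hterm : ∀ k ∈ Ico 1 (i + 1),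
            (-1 : ℝ) ^ (i - k) * bb ν (m - k - (i - k)) * x ^ (i - k) * ((-1 : ℝ) ^ k * x ^ k)
              = (-1 : ℝ) ^ i * bb ν (m - i) * x ^ i := by
          intro k hk
          rw [mem_Ico] at hk
          have e1 : m - k - (i - k) = m - i := by omega
          have e2 : i - k + k = i := by omega
          rw [e1, show (-1 : ℝ) ^ i = (-1 : ℝ) ^ (i - k) * (-1 : ℝ) ^ k from by
            rw [← pow_add, e2], show x ^ i = x ^ (i - k) * x ^ k from by rw [← pow_add, e2]]
          ring
        rw [Finset.sum_congr rfl hterm, Finset.sum_const, Nat.card_Ico]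
        simp [nsmul_eq_mul]
      rw [hS2]
      have hext1 : ∑ i ∈ Ico 1 (m + 1), (i : ℝ) * ((-1 : ℝ) ^ (m - i) * bb ν i * x ^ (m - i))
          = ∑ i ∈ range (m + 1), (i : ℝ) * ((-1 : ℝ) ^ (m - i) * bb ν i * x ^ (m - i)) := by
        rw [range_eq_Ico, Finset.sum_eq_sum_Ico_succ_bot (Nat.succ_pos m)]
        simp
      have hext2 : ∑ i ∈ Ico 1 (m + 1), (i : ℝ) * ((-1 : ℝ) ^ i * bb ν (m - i) * x ^ i)
          = ∑ i ∈ range (m + 1), (i : ℝ) * ((-1 : ℝ) ^ i * bb ν (m - i) * x ^ i) := by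
        rw [range_eq_Ico, Finset.sum_eq_sum_Ico_succ_bot (Nat.succ_pos m)]
        simp
      rw [hext1, hext2]
      have hrefl2 : ∑ i ∈ range (m + 1), (i : ℝ) * ((-1 : ℝ) ^ (m - i) * bb ν i * x ^ (m - i))
          = ∑ j ∈ range (m + 1),
              ((m - j : ℕ) : ℝ) * ((-1 : ℝ) ^ j * bb ν (m - j) * x ^ j) := by
        rw [← Finset.sum_range_reflect
          (fun i => (i : ℝ) * ((-1 : ℝ) ^ (m - i) * bb ν i * x ^ (m - i))) (m + 1)]
        apply Finset.sum_congr rfl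
        intro j hj
        rw [mem_range] at hj
        have e1 : m + 1 - 1 - j = m - j := by omega
        have e2 : m - (m - j) = j := by omega
        simp only [e1, e2]
      rw [hrefl2, ← Finset.sum_add_distrib, Finset.mul_sum]
      apply Finset.sum_congr rfl
      intro j hj
      rw [mem_range] at hj
      have e : ((m - j : ℕ) : ℝ) = (m : ℝ) - (j : ℝ) := by
        rw [Nat.cast_sub (by omega)]
      have hm0 : (m : ℝ) ≠ 0 := Nat.cast_ne_zero.mpr (by omega)
      rw [e]
      field_simp
      ring
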